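/- arXiv:1309.7937 — 8 statements merged into one kernel-verified Lean document; each statement's English description precedes it below -/
import Mathlib

section
/- Let ε, c_Ω1, c1, c2, c3 > 0 and control gains α, k1, k2, k3, k4 > 0 satisfy α > 1/2, k1 > 1/(2 ε c_Ω1), k2 ≥ c1/(ε c_Ω1), k3 ≥ c2/(ε c_Ω1), and k4 ≥ c3/(ε c_Ω1), and set γ1 ≜ min(α − 1/2, ε c_Ω1 k1 − 1/2). Then for all real numbers e1, e2, χ, B_k, Ω with |χ| ≤ c1 + c2‖z‖ + c3‖z‖², B_k ≤ −ε, and Ω ≥ c_Ω1, the following inequality holds: −α e1² + e1 e2 + χ e2 + B_k Ω k1 e2² + B_k Ω (k2 + k3‖z‖ + k4‖z‖²)|e2| ≤ −γ1 ‖z‖². -/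
set_option maxHeartbeats 1600000 in
/-- The key algebraic estimate (23)–(24): under the stated gain conditions,
the Lyapunov derivative expression in the controlled region is bounded by
`−γ1‖z‖²` with `γ1 = min(α − 1/2, ε c_Ω1 k1 − 1/2)`. -/
theorem controlled_region_decay (ε cΩ1 c1 c2 c3 α k1 k2 k3 k4 : ℝ)
    (hε : 0 < ε) (hcΩ1 : 0 < cΩ1) (hc1 : 0 < c1) (hc2 : 0 < c2) (hc3 : 0 < c3)
    (hαpos : 0 < α) (hk1pos : 0 < k1) (hk2pos : 0 < k2) (hk3pos : 0 < k3)
    (hk4pos : 0 < k4)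
    (hα : 1/2 < α) (hk1 : 1/(2 * ε * cΩ1) < k1)
    (hk2 : c1/(ε * cΩ1) ≤ k2) (hk3 : c2/(ε * cΩ1) ≤ k3) (hk4 : c3/(ε * cΩ1) ≤ k4) :
    ∀ e1 e2 χ Bk Ω : ℝ,
      |χ| ≤ c1 + c2 * Real.sqrt (e1 ^ 2 + e2 ^ 2)
            + c3 * Real.sqrt (e1 ^ 2 + e2 ^ 2) ^ 2 →
      Bk ≤ -ε → cΩ1 ≤ Ω →
      -α * e1 ^ 2 + e1 * e2 + χ * e2 + Bk * Ω * (k1 * e2 ^ 2)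
          + Bk * Ω * (k2 + k3 * Real.sqrt (e1 ^ 2 + e2 ^ 2)
              + k4 * Real.sqrt (e1 ^ 2 + e2 ^ 2) ^ 2) * |e2|
        ≤ -(min (α - 1/2) (ε * cΩ1 * k1 - 1/2)) * Real.sqrt (e1 ^ 2 + e2 ^ 2) ^ 2 := by
  intro e1 e2 χ Bk Ω hχ hBk hΩ
  set s := Real.sqrt (e1 ^ 2 + e2 ^ 2) with hs
  have hs0 : 0 ≤ s := Real.sqrt_nonneg _
  have hs2 : s ^ 2 = e1 ^ 2 + e2 ^ 2 := Real.sq_sqrt (by positivity)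
  have hecΩ : 0 < ε * cΩ1 := by positivity
  -- gain conditions cleared of denominators
  have hk1' : 1 / 2 < ε * cΩ1 * k1 := by
    rw [div_lt_iff₀ (by positivity : (0:ℝ) < 2 * ε * cΩ1)] at hk1
    nlinarith
  have hk2' : c1 ≤ ε * cΩ1 * k2 := by
    rw [div_le_iff₀ hecΩ] at hk2; linarith
  have hk3' : c2 ≤ ε * cΩ1 * k3 := by
    rw [div_le_iff₀ hecΩ] at hk3; linarith
  have hk4' : c3 ≤ ε * cΩ1 * k4 := by
    rw [div_le_iff₀ hecΩ] at hk4; linarith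
  have hBΩ : Bk * Ω ≤ -(ε * cΩ1) := by nlinarith
  have he2 : |e2| ≤ s := by
    rw [hs, ← Real.sqrt_sq_eq_abs]
    exact Real.sqrt_le_sqrt (by nlinarith [sq_nonneg e1])
  have hK : 0 ≤ k2 + k3 * s + k4 * s ^ 2 := by positivity
  -- bound cross terms
  have h1 : χ * e2 ≤ (c1 + c2 * s + c3 * s ^ 2) * |e2| := by
    calc χ * e2 ≤ |χ * e2| := le_abs_self _
    _ = |χ| * |e2| := abs_mul _ _
    _ ≤ (c1 + c2 * s + c3 * s ^ 2) * |e2| :=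
        mul_le_mul_of_nonneg_right hχ (abs_nonneg _)
  have h2 : Bk * Ω * (k2 + k3 * s + k4 * s ^ 2) * |e2|
      ≤ -(ε * cΩ1) * (k2 + k3 * s + k4 * s ^ 2) * |e2| := by
    have := mul_le_mul_of_nonneg_right hBΩ hK
    exact mul_le_mul_of_nonneg_right this (abs_nonneg _)
  have h3 : Bk * Ω * (k1 * e2 ^ 2) ≤ -(ε * cΩ1) * (k1 * e2 ^ 2) := by
    have : 0 ≤ k1 * e2 ^ 2 := by positivity
    nlinarith
  have habs : 0 ≤ |e2| := abs_nonneg _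
  have hcases : min (α - 1/2) (ε * cΩ1 * k1 - 1/2) ≤ α - 1/2 ∧
      min (α - 1/2) (ε * cΩ1 * k1 - 1/2) ≤ ε * cΩ1 * k1 - 1/2 :=
    ⟨min_le_left _ _, min_le_right _ _⟩
  obtain ⟨hm1, hm2⟩ := hcases
  have hE1 : c1 * |e2| ≤ ε * cΩ1 * k2 * |e2| := mul_le_mul_of_nonneg_right hk2' habs
  have hE2 : c2 * s * |e2| ≤ ε * cΩ1 * k3 * s * |e2| :=
    mul_le_mul_of_nonneg_right (mul_le_mul_of_nonneg_right hk3' hs0) habs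
  have hE3 : c3 * s ^ 2 * |e2| ≤ ε * cΩ1 * k4 * s ^ 2 * |e2| :=
    mul_le_mul_of_nonneg_right (mul_le_mul_of_nonneg_right hk4' (sq_nonneg s)) habs
  set γ := min (α - 1/2) (ε * cΩ1 * k1 - 1/2) with hγ
  have hA : γ * e1 ^ 2 ≤ (α - 1/2) * e1 ^ 2 :=
    mul_le_mul_of_nonneg_right hm1 (sq_nonneg e1)
  have hB : γ * e2 ^ 2 ≤ (ε * cΩ1 * k1 - 1/2) * e2 ^ 2 :=
    mul_le_mul_of_nonneg_right hm2 (sq_nonneg e2)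
  have hgs : γ * s ^ 2 = γ * e1 ^ 2 + γ * e2 ^ 2 := by rw [hs2]; ring
  linarith [h1, h2, h3, hA, hB, hE1, hE2, hE3, hgs, sq_nonneg (e1 - e2)]
end

section
/- Suppose on an interval [t0, t1] that e1, e2, M : [t0, t1] → ℝ are differentiable, c_m ≤ M(t) ≤ c_M, V(t) = M′(t)/2, |χ(t)| ≤ c1 + c2‖z(t)‖ + c3‖z(t)‖², B_k(t) ≤ −ε, c_Ω1 ≤ Ω(t), and the closed-loop error dynamics hold: e1′ = e2 − α e1 and M e2′ = χ − V e2 + B_k Ω [k1 e2 + (k2 + k3‖z‖ + k4‖z‖²) sign(e2)], where sign denotes the real sign function (sign(0) = 0). If the gain conditions α > 1/2, k1 > 1/(2 ε c_Ω1), k2 ≥ c1/(ε c_Ω1), k3 ≥ c2/(ε c_Ω1), k4 ≥ c3/(ε c_Ω1) hold, then for all t ∈ [t0, t1]: ‖z(t)‖ ≤ √(λ2/λ1) ‖z(t0)‖ e^{−γ1 (t − t0)/(2 λ2)}, where γ1 ≜ min(α − 1/2, ε c_Ω1 k1 − 1/2). -/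
/-- The Euclidean norm of the error vector `z = (e1, e2)`. -/
noncomputable def zNorm (e1 e2 : ℝ → ℝ) (t : ℝ) : ℝ :=
  Real.sqrt ((e1 t) ^ 2 + (e2 t) ^ 2)

set_option maxHeartbeats 1600000 in
/-- Theorem 1 of the paper: exponential stability of the tracking error in the
controlled region, for classical solutions of the closed-loop error system
under the sliding-mode controller. -/
theorem controlled_region_exponential_stability
    (cm cM c1 c2 c3 ε cΩ1 α k1 k2 k3 k4 t0 t1 lam1 lam2 γ1 : ℝ)
    (hcm : 0 < cm) (hcmM : cm ≤ cM)
    (hc1 : 0 < c1) (hc2 : 0 < c2) (hc3 : 0 < c3) (hε : 0 < ε) (hcΩ1 : 0 < cΩ1)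
    (ht01 : t0 ≤ t1)
    (hlam1 : lam1 = min (1/2) (cm/2)) (hlam2 : lam2 = max (1/2) (cM/2))
    (hγ1 : γ1 = min (α - 1/2) (ε * cΩ1 * k1 - 1/2))
    (hα : 1/2 < α) (hk1 : 1/(2 * ε * cΩ1) < k1)
    (hk2 : c1/(ε * cΩ1) ≤ k2) (hk3 : c2/(ε * cΩ1) ≤ k3) (hk4 : c3/(ε * cΩ1) ≤ k4)
    (e1 e2 M χ V Bk Ω : ℝ → ℝ)
    (hMb : ∀ t ∈ Set.Icc t0 t1, cm ≤ M t ∧ M t ≤ cM)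
    (hMdiff : ∀ t ∈ Set.Icc t0 t1, DifferentiableAt ℝ M t)
    (hV : ∀ t ∈ Set.Icc t0 t1, V t = deriv M t / 2)
    (hχ : ∀ t ∈ Set.Icc t0 t1,
      |χ t| ≤ c1 + c2 * zNorm e1 e2 t + c3 * (zNorm e1 e2 t) ^ 2)
    (hBk : ∀ t ∈ Set.Icc t0 t1, Bk t ≤ -ε)
    (hΩ : ∀ t ∈ Set.Icc t0 t1, cΩ1 ≤ Ω t)
    (he1 : ∀ t ∈ Set.Icc t0 t1, HasDerivAt e1 (e2 t - α * e1 t) t)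
    (he2diff : ∀ t ∈ Set.Icc t0 t1, DifferentiableAt ℝ e2 t)
    (he2 : ∀ t ∈ Set.Icc t0 t1,
      M t * deriv e2 t = χ t - V t * e2 t
        + Bk t * Ω t * (k1 * e2 t
          + (k2 + k3 * zNorm e1 e2 t + k4 * (zNorm e1 e2 t) ^ 2)
              * Real.sign (e2 t))) :
    ∀ t ∈ Set.Icc t0 t1,
      zNorm e1 e2 t ≤ Real.sqrt (lam2 / lam1) * zNorm e1 e2 t0
        * Real.exp (-(γ1 / (2 * lam2)) * (t - t0)) := by
  have hεΩ : 0 < ε * cΩ1 := mul_pos hε hcΩ1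
  have hk1pos : 0 < k1 := lt_trans (by positivity) hk1
  have hk2pos : 0 < k2 := lt_of_lt_of_le (by positivity) hk2
  have hk3pos : 0 < k3 := lt_of_lt_of_le (by positivity) hk3
  have hk4pos : 0 < k4 := lt_of_lt_of_le (by positivity) hk4
  have hlam1pos : 0 < lam1 := by rw [hlam1]; positivity
  have hlam2pos : 0 < lam2 := by rw [hlam2]; positivity
  have hlam1h : lam1 ≤ 1/2 := hlam1 ▸ min_le_left _ _
  have hlam1m : lam1 ≤ cm/2 := hlam1 ▸ min_le_right _ _
  have hlam2h : 1/2 ≤ lam2 := hlam2 ▸ le_max_left _ _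
  have hlam2M : cM/2 ≤ lam2 := hlam2 ▸ le_max_right _ _
  have hεk1 : 1/2 < ε * cΩ1 * k1 := by
    have h := (div_lt_iff₀ (by positivity : (0:ℝ) < 2 * ε * cΩ1)).1 hk1
    nlinarith
  have hγ1pos : 0 < γ1 := by
    rw [hγ1]; exact lt_min (by linarith) (by linarith)
  -- abbreviations
  set n : ℝ → ℝ := zNorm e1 e2 with hn
  have hnsq : ∀ t, n t ^ 2 = e1 t ^ 2 + e2 t ^ 2 := by
    intro t
    have : (0:ℝ) ≤ e1 t ^ 2 + e2 t ^ 2 := by positivity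
    simp [hn, zNorm, Real.sq_sqrt this]
  have hnnn : ∀ t, 0 ≤ n t := fun t => Real.sqrt_nonneg _
  set W : ℝ → ℝ := fun t => e1 t ^ 2 / 2 + M t * e2 t ^ 2 / 2 with hWdef
  set W' : ℝ → ℝ := fun t => e1 t * (e2 t - α * e1 t) + deriv M t * e2 t ^ 2 / 2
      + e2 t * (M t * deriv e2 t) with hW'def
  have hWderiv : ∀ t ∈ Set.Icc t0 t1, HasDerivAt W (W' t) t := by
    intro t ht
    have h1 : HasDerivAt (fun s => e1 s ^ 2 / 2)
        ((2 * e1 t ^ 1 * (e2 t - α * e1 t)) / 2) t := ((he1 t ht).pow 2).div_const 2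
    have h2 : HasDerivAt (fun s => M s * e2 s ^ 2 / 2)
        ((deriv M t * e2 t ^ 2 + M t * (2 * e2 t ^ 1 * deriv e2 t)) / 2) t :=
      (((hMdiff t ht).hasDerivAt).mul (((he2diff t ht).hasDerivAt).pow 2)).div_const 2
    have h12 := h1.add h2
    have heq : W' t = (2 * e1 t ^ 1 * (e2 t - α * e1 t)) / 2
        + (deriv M t * e2 t ^ 2 + M t * (2 * e2 t ^ 1 * deriv e2 t)) / 2 := by
      simp only [hW'def]; ring
    rw [heq]
    exact h12
  -- lower and upper Lyapunov bounds
  have hWlow : ∀ t ∈ Set.Icc t0 t1, lam1 * n t ^ 2 ≤ W t := by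
    intro t ht
    have hm := (hMb t ht).1
    have h1 := sq_nonneg (e1 t); have h2 := sq_nonneg (e2 t)
    rw [hnsq]; simp only [hWdef]; nlinarith
  have hWhigh : ∀ t ∈ Set.Icc t0 t1, W t ≤ lam2 * n t ^ 2 := by
    intro t ht
    have hm := (hMb t ht).2
    have h1 := sq_nonneg (e1 t); have h2 := sq_nonneg (e2 t)
    rw [hnsq]; simp only [hWdef]; nlinarith
  -- key differential inequality
  have hbound : ∀ x ∈ Set.Ico t0 t1, W' x ≤ -(γ1 / lam2) * W x + 0 := by
    intro x hx
    have hx' : x ∈ Set.Icc t0 t1 := Set.Ico_subset_Icc_self hx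
    have hMe2 := he2 x hx'
    have hVx := hV x hx'
    set κ := k2 + k3 * n x + k4 * n x ^ 2 with hκ
    have hκnn : 0 ≤ κ := by
      have := hnnn x
      have h2 := sq_nonneg (n x)
      rw [hκ]; nlinarith
    have hsign : e2 x * Real.sign (e2 x) = |e2 x| := by
      rcases lt_trichotomy (e2 x) 0 with h | h | h
      · rw [Real.sign_of_neg h, abs_of_neg h]; ring
      · simp [h]
      · rw [Real.sign_of_pos h, abs_of_pos h]; ring
    have hBΩ : Bk x * Ω x ≤ -(ε * cΩ1) := by
      have h1 := hBk x hx'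
      have h2 := hΩ x hx'
      nlinarith [mul_nonneg (by linarith : (0:ℝ) ≤ -Bk x - ε) (by linarith : (0:ℝ) ≤ Ω x - cΩ1)]
    have hκb : c1 + c2 * n x + c3 * n x ^ 2 ≤ ε * cΩ1 * κ := by
      have h2 : c1 ≤ k2 * (ε * cΩ1) := (div_le_iff₀ hεΩ).1 hk2
      have h3 : c2 ≤ k3 * (ε * cΩ1) := (div_le_iff₀ hεΩ).1 hk3
      have h4 : c3 ≤ k4 * (ε * cΩ1) := (div_le_iff₀ hεΩ).1 hk4
      have hn0 := hnnn x
      have hn2 : (0:ℝ) ≤ n x ^ 2 := sq_nonneg (n x)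
      rw [hκ]
      nlinarith [mul_le_mul_of_nonneg_right h3 hn0, mul_le_mul_of_nonneg_right h4 hn2]
    have hχb : e2 x * χ x ≤ |e2 x| * (c1 + c2 * n x + c3 * n x ^ 2) := by
      calc e2 x * χ x ≤ |e2 x * χ x| := le_abs_self _
        _ = |e2 x| * |χ x| := abs_mul _ _
        _ ≤ |e2 x| * (c1 + c2 * n x + c3 * n x ^ 2) :=
            mul_le_mul_of_nonneg_left (hχ x hx') (abs_nonneg _)
    -- rewrite W' x
    have hW'x : W' x = e1 x * e2 x - α * e1 x ^ 2 + e2 x * χ x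
        + (Bk x * Ω x) * k1 * e2 x ^ 2 + (Bk x * Ω x) * κ * |e2 x| := by
      simp only [hW'def]
      rw [hMe2, hVx, ← hsign]
      ring
    have t1b : (Bk x * Ω x) * k1 * e2 x ^ 2 ≤ -(ε * cΩ1) * k1 * e2 x ^ 2 := by
      have : (0:ℝ) ≤ k1 * e2 x ^ 2 := by positivity
      nlinarith
    have t2b : (Bk x * Ω x) * κ * |e2 x| ≤ -(ε * cΩ1) * κ * |e2 x| := by
      have : (0:ℝ) ≤ κ * |e2 x| := mul_nonneg hκnn (abs_nonneg _)
      nlinarith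
    have hsum : e2 x * χ x + (Bk x * Ω x) * κ * |e2 x| ≤ 0 := by
      have h5 : |e2 x| * (c1 + c2 * n x + c3 * n x ^ 2) ≤ |e2 x| * (ε * cΩ1 * κ) :=
        mul_le_mul_of_nonneg_left hκb (abs_nonneg _)
      nlinarith [abs_nonneg (e2 x)]
    have hγa : γ1 ≤ α - 1/2 := hγ1 ▸ min_le_left _ _
    have hγb : γ1 ≤ ε * cΩ1 * k1 - 1/2 := hγ1 ▸ min_le_right _ _
    have step1 : W' x ≤ -γ1 * (e1 x ^ 2 + e2 x ^ 2) := by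
      rw [hW'x]
      nlinarith [sq_nonneg (e1 x - e2 x), sq_nonneg (e1 x), sq_nonneg (e2 x)]
    have step2 : -γ1 * (e1 x ^ 2 + e2 x ^ 2) ≤ -(γ1 / lam2) * W x := by
      have hWx : W x ≤ lam2 * (e1 x ^ 2 + e2 x ^ 2) := by
        have h := hWhigh x hx'
        rwa [hnsq] at h
      have hdivnn : 0 ≤ γ1 / lam2 := by positivity
      have h6 : (γ1 / lam2) * W x ≤ (γ1 / lam2) * (lam2 * (e1 x ^ 2 + e2 x ^ 2)) :=
        mul_le_mul_of_nonneg_left hWx hdivnn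
      have h7 : (γ1 / lam2) * (lam2 * (e1 x ^ 2 + e2 x ^ 2)) = γ1 * (e1 x ^ 2 + e2 x ^ 2) := by
        field_simp
      linarith
    simp only [add_zero]
    exact le_trans step1 step2
  -- continuity of W
  have hWcont : ContinuousOn W (Set.Icc t0 t1) := fun t ht =>
    ((((he1 t ht).differentiableAt.pow 2).div_const 2).add
      (((hMdiff t ht).mul ((he2diff t ht).pow 2)).div_const 2)).continuousAt.continuousWithinAt
  -- Grönwall
  have hGron := le_gronwallBound_of_liminf_deriv_right_le (f := W) (f' := W')
    (δ := W t0) (K := -(γ1 / lam2)) (ε := 0) hWcont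
    (fun x hx r hr =>
      ((hWderiv x (Set.Ico_subset_Icc_self hx)).hasDerivWithinAt.liminf_right_slope_le hr))
    le_rfl hbound
  -- conclude
  intro t ht
  have hG := hGron t ht
  rw [gronwallBound_ε0] at hG
  have ht0mem : t0 ∈ Set.Icc t0 t1 := Set.left_mem_Icc.2 ht01
  set Ee := Real.exp (-(γ1 / lam2) * (t - t0)) with hEe
  have hEpos : 0 < Ee := Real.exp_pos _
  have hWt0 : W t0 ≤ lam2 * n t0 ^ 2 := hWhigh t0 ht0mem
  have hchain : lam1 * n t ^ 2 ≤ lam2 * n t0 ^ 2 * Ee := by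
    have h1 := hWlow t ht
    have h2 : W t0 * Ee ≤ lam2 * n t0 ^ 2 * Ee :=
      mul_le_mul_of_nonneg_right hWt0 hEpos.le
    linarith
  set R := Real.sqrt (lam2 / lam1) * n t0 * Real.exp (-(γ1 / (2 * lam2)) * (t - t0)) with hR
  have hRnn : 0 ≤ R := by
    have := hnnn t0; positivity
  have hRsq : R ^ 2 = (lam2 / lam1) * n t0 ^ 2 * Ee := by
    rw [hR, mul_pow, mul_pow, Real.sq_sqrt (by positivity : (0:ℝ) ≤ lam2 / lam1)]
    congr 1
    rw [sq, ← Real.exp_add, hEe]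
    congr 1
    field_simp
    ring
  have hfin : n t ^ 2 ≤ R ^ 2 := by
    rw [hRsq]
    rw [show lam2 / lam1 * n t0 ^ 2 * Ee = (lam2 * n t0 ^ 2 * Ee) / lam1 by ring]
    rw [le_div_iff₀ hlam1pos]
    nlinarith
  calc n t = Real.sqrt (n t ^ 2) := (Real.sqrt_sq (hnnn t)).symm
    _ ≤ Real.sqrt (R ^ 2) := Real.sqrt_le_sqrt hfin
    _ = R := Real.sqrt_sq hRnn
end

section
/- Let α, c1, c2, c3, λ1 > 0. For all real numbers e1, e2, χ, V with |χ| ≤ c1 + c2‖z‖ + c3‖z‖² and λ1‖z‖² ≤ V, the following inequality holds: −α e1² + e1 e2 + χ e2 ≤ (c1/√λ1)·V^{1/2} + ((c2 + 1/2)/λ1)·V + (c3/λ1^{3/2})·V^{3/2}. -/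
set_option maxHeartbeats 1600000 in
/-- Inequalities (29)–(30): bound on the Lyapunov derivative expression in the
uncontrolled region in terms of `V^{1/2}`, `V`, and `V^{3/2}`. -/
theorem uncontrolled_region_derivative_bound (α c1 c2 c3 lam1 : ℝ)
    (hα : 0 < α) (hc1 : 0 < c1) (hc2 : 0 < c2) (hc3 : 0 < c3) (hlam1 : 0 < lam1) :
    ∀ e1 e2 χ V : ℝ,
      |χ| ≤ c1 + c2 * Real.sqrt (e1 ^ 2 + e2 ^ 2)
            + c3 * Real.sqrt (e1 ^ 2 + e2 ^ 2) ^ 2 →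
      lam1 * Real.sqrt (e1 ^ 2 + e2 ^ 2) ^ 2 ≤ V →
      -α * e1 ^ 2 + e1 * e2 + χ * e2
        ≤ (c1 / Real.sqrt lam1) * V ^ ((1 : ℝ)/2)
          + ((c2 + 1/2) / lam1) * V
          + (c3 / lam1 ^ ((3 : ℝ)/2)) * V ^ ((3 : ℝ)/2) := by
  intro e1 e2 χ V hχ hV
  set r := Real.sqrt (e1 ^ 2 + e2 ^ 2) with hrdef
  have hr0 : 0 ≤ r := Real.sqrt_nonneg _
  have hr2 : r ^ 2 = e1 ^ 2 + e2 ^ 2 := Real.sq_sqrt (by positivity)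
  have hV0 : 0 ≤ V := le_trans (by positivity) hV
  set s := Real.sqrt V with hsdef
  set sl := Real.sqrt lam1 with hsldef
  have hs0 : 0 ≤ s := Real.sqrt_nonneg _
  have hsl0 : 0 < sl := Real.sqrt_pos.mpr hlam1
  have hs2 : s ^ 2 = V := Real.sq_sqrt hV0
  have hsl2 : sl ^ 2 = lam1 := Real.sq_sqrt hlam1.le
  -- rpow rewrites
  have hVh : V ^ ((1 : ℝ)/2) = s := (Real.sqrt_eq_rpow V).symm
  have hV32 : V ^ ((3 : ℝ)/2) = V * s := by
    have : V ^ ((3 : ℝ)/2) = (V ^ ((1:ℝ)/2)) ^ (3 : ℕ) := by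
      rw [← Real.rpow_natCast (V ^ ((1:ℝ)/2)) 3, ← Real.rpow_mul hV0]
      norm_num
    rw [this, hVh, pow_succ, pow_two, ← pow_two, hs2]
  have hl32 : lam1 ^ ((3 : ℝ)/2) = lam1 * sl := by
    have h1 : lam1 ^ ((1 : ℝ)/2) = sl := (Real.sqrt_eq_rpow lam1).symm
    have : lam1 ^ ((3 : ℝ)/2) = (lam1 ^ ((1:ℝ)/2)) ^ (3 : ℕ) := by
      rw [← Real.rpow_natCast (lam1 ^ ((1:ℝ)/2)) 3, ← Real.rpow_mul hlam1.le]
      norm_num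
    rw [this, h1, pow_succ, pow_two, ← pow_two, hsl2]
  rw [hVh, hV32, hl32]
  -- key comparisons
  have hrsl : r * sl ≤ s := by
    nlinarith [mul_nonneg hr0 hsl0.le, sq_nonneg (r * sl - s), sq_nonneg (r * sl + s)]
  have he2 : |e2| ≤ r := by
    rw [abs_le]
    constructor <;> nlinarith [sq_nonneg e1]
  -- step 1: bound LHS by polynomial in r
  have hchie : χ * e2 ≤ (c1 + c2 * r + c3 * r ^ 2) * r := by
    calc χ * e2 ≤ |χ * e2| := le_abs_self _
      _ = |χ| * |e2| := abs_mul _ _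
      _ ≤ (c1 + c2 * r + c3 * r ^ 2) * r := by
          apply mul_le_mul hχ he2 (abs_nonneg _)
          nlinarith
  have step1 : -α * e1 ^ 2 + e1 * e2 + χ * e2
      ≤ c1 * r + (c2 + 1/2) * r ^ 2 + c3 * r ^ 3 := by
    nlinarith [sq_nonneg (e1 - e2), sq_nonneg e1, mul_nonneg hα.le (sq_nonneg e1)]
  -- step 2: bound each monomial
  have t1 : c1 * r ≤ c1 / sl * s := by
    rw [div_mul_eq_mul_div, le_div_iff₀ hsl0, mul_assoc]
    exact mul_le_mul_of_nonneg_left hrsl hc1.le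
  have t2 : (c2 + 1/2) * r ^ 2 ≤ (c2 + 1/2) / lam1 * V := by
    rw [div_mul_eq_mul_div, le_div_iff₀ hlam1]
    calc (c2 + 1/2) * r ^ 2 * lam1 = (c2 + 1/2) * (lam1 * r ^ 2) := by ring
      _ ≤ (c2 + 1/2) * V := mul_le_mul_of_nonneg_left hV (by linarith)
  have t3 : c3 * r ^ 3 ≤ c3 / (lam1 * sl) * (V * s) := by
    rw [div_mul_eq_mul_div, le_div_iff₀ (by positivity)]
    have h1 : r ^ 2 * lam1 ≤ V := by nlinarith
    have h2 : (r ^ 2 * lam1) * (r * sl) ≤ V * s :=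
      mul_le_mul h1 hrsl (by positivity) hV0
    calc c3 * r ^ 3 * (lam1 * sl) = c3 * ((r ^ 2 * lam1) * (r * sl)) := by ring
      _ ≤ c3 * (V * s) := mul_le_mul_of_nonneg_left h2 hc3.le
  linarith [step1, t1, t2, t3]
end

section
/- Let A, B, C > 0 with 4AC > B², and set ω ≜ √(4AC − B²). Suppose V : [t0, t1] → ℝ is differentiable, V(t) ≥ 0, and V′(t) ≤ A·V(t)^{1/2} + B·V(t) + C·V(t)^{3/2} for all t ∈ [t0, t1]. If (ω/4)(t1 − t0) + arctan((2C√(V(t0)) + B)/ω) < π/2, then for all t ∈ [t0, t1]: V(t) ≤ (1/(4C²))·[ω·tan((ω/4)(t − t0) + arctan((2C√(V(t0)) + B)/ω)) − B]². -/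
open Set Real

set_option maxHeartbeats 1000000 in

lemma riccati_aux (A B C t0 t1 ω ε : ℝ)
    (hA : 0 < A) (hB : 0 < B) (hC : 0 < C)
    (ht : t0 ≤ t1) (hωpos : 0 < ω) (hω2 : ω ^ 2 = 4 * A * C - B ^ 2) (hε : 0 < ε)
    (V V' : ℝ → ℝ)
    (hV : ∀ t ∈ Set.Icc t0 t1, HasDerivAt V (V' t) t)
    (hVnonneg : ∀ t ∈ Set.Icc t0 t1, 0 ≤ V t)
    (hineq : ∀ t ∈ Set.Icc t0 t1,
      V' t ≤ A * (V t) ^ ((1 : ℝ)/2) + B * V t + C * (V t) ^ ((3 : ℝ)/2))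
    (hlt : (ω/4 + ε) * (t1 - t0)
        + Real.arctan ((2 * C * Real.sqrt (V t0) + B + ε)/ω) < Real.pi/2) :
    ∀ t ∈ Set.Icc t0 t1,
      V t ≤ ((ω * Real.tan ((ω/4 + ε) * (t - t0)
          + Real.arctan ((2 * C * Real.sqrt (V t0) + B + ε)/ω)) - B)/(2*C)) ^ 2 := by
  set v0 := Real.sqrt (V t0) with hv0def
  have hv0 : 0 ≤ v0 := Real.sqrt_nonneg _
  set α := Real.arctan ((2 * C * v0 + B + ε)/ω) with hαdef
  set c := ω/4 + ε with hcdef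
  set θ : ℝ → ℝ := fun t => c * (t - t0) + α with hθdef
  set g : ℝ → ℝ := fun t => (ω * Real.tan (θ t) - B)/(2*C) with hgdef
  clear_value v0 α c θ g
  have hc : 0 < c := by rw [hcdef]; positivity
  have hθeval : ∀ t, θ t = c * (t - t0) + α := fun t => by rw [hθdef]
  have hgeval : ∀ t, g t = (ω * Real.tan (θ t) - B)/(2*C) := fun t => by rw [hgdef]
  have hαmem : α ∈ Ioo (-(π/2)) (π/2) := by
    rw [hαdef]
    exact ⟨Real.neg_pi_div_two_lt_arctan _, Real.arctan_lt_pi_div_two _⟩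
  -- θ stays in (-π/2, π/2)
  have hθmem : ∀ t ∈ Icc t0 t1, θ t ∈ Ioo (-(π/2)) (π/2) := by
    intro t htt
    rw [hθeval]
    constructor
    · have h2 : 0 ≤ c * (t - t0) := by nlinarith [htt.1]
      linarith [hαmem.1]
    · have h2 : c * (t - t0) + α ≤ c * (t1 - t0) + α := by nlinarith [htt.2]
      linarith
  have hcos : ∀ t ∈ Icc t0 t1, 0 < Real.cos (θ t) :=
    fun t htt => Real.cos_pos_of_mem_Ioo (hθmem t htt)
  -- tan θ t ≥ tan α
  have htan : ∀ t ∈ Icc t0 t1, (2 * C * v0 + B + ε)/ω ≤ Real.tan (θ t) := by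
    intro t htt
    have hle : α ≤ θ t := by
      rw [hθeval]; nlinarith [htt.1]
    have := Real.strictMonoOn_tan.monotoneOn hαmem (hθmem t htt) hle
    rwa [hαdef, Real.tan_arctan] at this
  have hgpos : ∀ t ∈ Icc t0 t1, v0 + ε/(2*C) ≤ g t := by
    intro t htt
    have h1 := htan t htt
    rw [div_le_iff₀ hωpos] at h1
    rw [hgeval, le_div_iff₀ (by positivity : (0:ℝ) < 2*C)]
    have he : (v0 + ε/(2*C)) * (2*C) = 2*C*v0 + ε := by field_simp
    rw [he]; linarith
  have hgpos' : ∀ t ∈ Icc t0 t1, 0 < g t := by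
    intro t htt
    have h1 : 0 < v0 + ε/(2*C) := by positivity
    linarith [hgpos t htt]
  -- derivative of g^2
  set D : ℝ → ℝ := fun x => 2 * g x * ((ω * ((1/Real.cos (θ x) ^ 2) * c)) / (2*C)) with hDdef
  clear_value D
  have hDeval : ∀ x, D x = 2 * g x * ((ω * ((1/Real.cos (θ x) ^ 2) * c)) / (2*C)) :=
    fun x => by rw [hDdef]
  have hDeriv : ∀ x ∈ Icc t0 t1, HasDerivAt (fun t => g t ^ 2) (D x) x := by
    intro x hx
    have hθd : HasDerivAt θ c x := by
      rw [hθdef]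
      simpa using (((hasDerivAt_id x).sub_const t0).const_mul c).add_const α
    have htd : HasDerivAt (fun t => Real.tan (θ t)) ((1/Real.cos (θ x) ^ 2) * c) x :=
      (Real.hasDerivAt_tan (ne_of_gt (hcos x hx))).comp x hθd
    have hgd : HasDerivAt g ((ω * ((1/Real.cos (θ x) ^ 2) * c)) / (2*C)) x := by
      rw [hgdef]
      exact ((htd.const_mul ω).sub_const B).div_const (2*C)
    have h2 := hgd.pow 2
    rw [hDeval]
    refine h2.congr_deriv ?_
    norm_num
  -- main comparison
  have main : ∀ x ∈ Icc t0 t1, V x ≤ g x ^ 2 := by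
    apply image_le_of_deriv_right_lt_deriv_boundary'
      (fun x hx => (hV x hx).continuousAt.continuousWithinAt)
      (fun x hx => (hV x (Ico_subset_Icc_self hx)).hasDerivWithinAt)
      ?_ (fun x hx => (hDeriv x hx).continuousAt.continuousWithinAt)
      (fun x hx => (hDeriv x (Ico_subset_Icc_self hx)).hasDerivWithinAt)
      ?_
    · -- V t0 ≤ g t0 ^ 2
      have hmem : t0 ∈ Icc t0 t1 := ⟨le_refl _, ht⟩
      have h1 : v0 + ε/(2*C) ≤ g t0 := hgpos t0 hmem
      have h2 : V t0 = v0 ^ 2 := by rw [hv0def, Real.sq_sqrt (hVnonneg t0 hmem)]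
      have h3 : 0 < ε/(2*C) := by positivity
      nlinarith
    · -- contact point strict inequality
      intro x hx hcontact
      have hx' : x ∈ Icc t0 t1 := Ico_subset_Icc_self hx
      have hs : 0 < g x := hgpos' x hx'
      set s := g x with hsdef
      clear_value s
      have hVx : V x = s ^ 2 := hcontact
      have h12 : V x ^ ((1:ℝ)/2) = s := by
        rw [hVx, ← Real.rpow_natCast s 2, ← Real.rpow_mul hs.le]
        norm_num
      have h32 : V x ^ ((3:ℝ)/2) = s ^ 3 := by
        rw [hVx, ← Real.rpow_natCast s 2, ← Real.rpow_mul hs.le]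
        norm_num
      have hV'le : V' x ≤ A * s + B * s ^ 2 + C * s ^ 3 := by
        have h0 := hineq x hx'
        rwa [h12, h32, hVx] at h0
      -- tan θ x in terms of s
      have htn : Real.tan (θ x) = (2*C*s + B)/ω := by
        have h0 : s = (ω * Real.tan (θ x) - B)/(2*C) := by rw [hsdef, hgeval]
        field_simp at h0 ⊢
        linarith
      have hsec : (1:ℝ)/Real.cos (θ x) ^ 2 = 1 + Real.tan (θ x) ^ 2 := by
        have hcx := (hcos x hx').ne'
        rw [Real.tan_eq_sin_div_cos]
        field_simp
        exact (Real.cos_sq_add_sin_sq _).symm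
      have e1 : 1 + ((2*C*s + B)/ω) ^ 2 = 4*C*(A + B*s + C*s^2)/ω^2 := by
        rw [div_pow]
        field_simp
        linear_combination hω2
      have hDx : D x = s * (A + B*s + C*s^2) * (1 + 4*ε/ω) := by
        rw [hDeval, hsec, htn, e1, ← hsdef, hcdef]
        field_simp
      rw [hDx]
      have hP : 0 < s * (A + B*s + C*s^2) := by positivity
      have hd : 0 < 4*ε/ω := by positivity
      nlinarith [mul_pos hP hd]
  intro t htt
  rw [← hθeval t, ← hgeval t]
  exact main t htt


/-- Comparison lemma underlying Theorem 2: a solution of the Riccati-type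
differential inequality `V' ≤ A V^{1/2} + B V + C V^{3/2}` admits a
tangent-shaped upper bound with finite escape time, provided the
reverse dwell-time condition holds. -/
theorem riccati_comparison (A B C t0 t1 ω : ℝ)
    (hA : 0 < A) (hB : 0 < B) (hC : 0 < C) (hAC : B ^ 2 < 4 * A * C)
    (ht : t0 ≤ t1)
    (hω : ω = Real.sqrt (4 * A * C - B ^ 2))
    (V V' : ℝ → ℝ)
    (hV : ∀ t ∈ Set.Icc t0 t1, HasDerivAt V (V' t) t)
    (hVnonneg : ∀ t ∈ Set.Icc t0 t1, 0 ≤ V t)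
    (hineq : ∀ t ∈ Set.Icc t0 t1,
      V' t ≤ A * (V t) ^ ((1 : ℝ)/2) + B * V t + C * (V t) ^ ((3 : ℝ)/2))
    (hrdt : (ω/4) * (t1 - t0)
        + Real.arctan ((2 * C * Real.sqrt (V t0) + B)/ω) < Real.pi/2) :
    ∀ t ∈ Set.Icc t0 t1,
      V t ≤ (1/(4 * C ^ 2)) *
        (ω * Real.tan ((ω/4) * (t - t0)
            + Real.arctan ((2 * C * Real.sqrt (V t0) + B)/ω)) - B) ^ 2 := by
  have hωpos : 0 < ω := by
    rw [hω]; exact Real.sqrt_pos.2 (by linarith)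
  have hω2 : ω ^ 2 = 4 * A * C - B ^ 2 := by
    rw [hω]; exact Real.sq_sqrt (by linarith)
  intro t htt
  set v0 := Real.sqrt (V t0) with hv0def
  have hv0 : 0 ≤ v0 := Real.sqrt_nonneg _
  -- the dwell-time function of ε
  set F : ℝ → ℝ := fun ε => (ω/4 + ε) * (t1 - t0)
      + Real.arctan ((2 * C * v0 + B + ε)/ω) with hFdef
  have hF0 : F 0 < π/2 := by simpa [hFdef] using hrdt
  have hFc : Continuous F := by
    apply Continuous.add
    · exact (continuous_const.add continuous_id).mul continuous_const
    · exact Real.continuous_arctan.comp ((continuous_const.add continuous_id).div_const ω)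
  -- the bound function of ε
  set G : ℝ → ℝ := fun ε => ((ω * Real.tan ((ω/4 + ε) * (t - t0)
      + Real.arctan ((2 * C * v0 + B + ε)/ω)) - B)/(2*C)) ^ 2 with hGdef
  have hev : ∀ᶠ ε in nhdsWithin (0:ℝ) (Set.Ioi 0), V t ≤ G ε := by
    have h1 : ∀ᶠ ε in nhds (0:ℝ), F ε < π/2 :=
      (hFc.continuousAt (x := 0)).eventually_lt continuousAt_const hF0
    filter_upwards [nhdsWithin_le_nhds h1, self_mem_nhdsWithin] with ε hFε hεpos
    exact riccati_aux A B C t0 t1 ω ε hA hB hC ht hωpos hω2 hεpos V V'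
      hV hVnonneg hineq hFε t htt
  -- continuity of G at 0
  have hΘc : Continuous (fun ε : ℝ => (ω/4 + ε) * (t - t0)
      + Real.arctan ((2 * C * v0 + B + ε)/ω)) := by
    apply Continuous.add
    · exact (continuous_const.add continuous_id).mul continuous_const
    · exact Real.continuous_arctan.comp ((continuous_const.add continuous_id).div_const ω)
  have hθ0mem : (ω/4 + 0) * (t - t0) + Real.arctan ((2 * C * v0 + B + 0)/ω)
      ∈ Set.Ioo (-(π/2)) (π/2) := by
    constructor
    · have h1 : -(π/2) < Real.arctan ((2 * C * v0 + B + 0)/ω) :=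
        Real.neg_pi_div_two_lt_arctan _
      have h2 : 0 ≤ (ω/4 + 0) * (t - t0) := by nlinarith [htt.1]
      linarith
    · have h2 : (ω/4 + 0) * (t - t0) ≤ (ω/4) * (t1 - t0) := by nlinarith [htt.2]
      have h3 : Real.arctan ((2 * C * v0 + B + 0)/ω)
          = Real.arctan ((2 * C * v0 + B)/ω) := by norm_num
      rw [h3]; linarith
  have hcos0 : Real.cos ((ω/4 + 0) * (t - t0) + Real.arctan ((2 * C * v0 + B + 0)/ω)) ≠ 0 :=
    (Real.cos_pos_of_mem_Ioo hθ0mem).ne'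
  have htanc : ContinuousAt Real.tan ((ω/4 + 0) * (t - t0)
      + Real.arctan ((2 * C * v0 + B + 0)/ω)) :=
    Real.continuousAt_tan.2 hcos0
  have h1 : ContinuousAt (fun ε : ℝ => Real.tan ((ω/4 + ε) * (t - t0)
      + Real.arctan ((2 * C * v0 + B + ε)/ω))) 0 :=
    ContinuousAt.comp (g := Real.tan) (x := (0:ℝ)) htanc hΘc.continuousAt
  have hGc : ContinuousAt G 0 := by
    rw [hGdef]
    exact (((h1.const_mul ω).sub continuousAt_const).div_const (2*C)).pow 2
  have hTend : Filter.Tendsto G (nhdsWithin (0:ℝ) (Set.Ioi 0)) (nhds (G 0)) :=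
    hGc.continuousWithinAt.tendsto
  have hle : V t ≤ G 0 := ge_of_tendsto hTend hev
  have hG0 : G 0 = (1/(4 * C ^ 2)) *
      (ω * Real.tan ((ω/4) * (t - t0)
          + Real.arctan ((2 * C * v0 + B)/ω)) - B) ^ 2 := by
    rw [hGdef]
    norm_num
    rw [div_pow, show ((2:ℝ)*C)^2 = 4*C^2 from by ring]
    rw [div_eq_mul_inv]
    ring
  rw [hG0] at hle
  exact hle
end

section
/- Suppose on an interval [t0, t1] that e1, e2, M : [t0, t1] → ℝ are differentiable, c_m ≤ M(t) ≤ c_M, V(t) = M′(t)/2, |χ(t)| ≤ c1 + c2‖z(t)‖ + c3‖z(t)‖², and the uncontrolled error dynamics hold: e1′ = e2 − α e1 and M e2′ = χ − V e2, with α > 0. Define a1 ≜ c3/λ1^{3/2}, a2 ≜ (c2 + 1/2)/λ1, a3 ≜ √(4 a1 c1/√λ1 − a2²), and assume 4 a1 c1/√λ1 > a2². If the reverse dwell-time condition holds: (a3/4)(t1 − t0) + arctan((2 a1/a3)·√λ2·‖z(t0)‖ + a2/a3) < π/2, then for all t ∈ [t0, t1]: ‖z(t)‖ ≤ (1/(2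 a1 √λ1))·{a3·tan[(a3/4)(t − t0) + arctan((2 a1/a3)·√λ2·‖z(t0)‖ + a2/a3)] − a2}. -/
open Set Real
set_option maxHeartbeats 8000000


lemma sq_le_sq_add (x e : ℝ) (hx : 0 ≤ x) (he : 0 ≤ e) : x^2 ≤ (x+e)^2 := by nlinarith

lemma riccati_step (A A2 bB t0 s v0 : ℝ) (hA : 0 < A)
    (hs2 : s^2 = 4*A*bB - A2^2) (hspos : 0 < s)
    (g : ℝ → ℝ)
    (hg : ∀ u, g u = (s * Real.tan (s/4*(u-t0) + Real.arctan v0) - A2)/(2*A))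
    {t : ℝ} (ht0 : t0 ≤ t)
    (hlt : s/4*(t-t0) + Real.arctan v0 < Real.pi/2) :
    HasDerivAt g ((A * g t^2 + A2 * g t + bB)/2) t ∧ (s * v0 - A2)/(2*A) ≤ g t := by
  set θ : ℝ → ℝ := fun u => s/4*(u-t0) + Real.arctan v0 with hθ
  have hstep : 0 ≤ s/4*(t-t0) := mul_nonneg (by linarith) (by linarith)
  have hθmem : θ t ∈ Ioo (-(Real.pi/2)) (Real.pi/2) := by
    constructor
    · have h1 : -(Real.pi/2) < Real.arctan v0 := Real.neg_pi_div_two_lt_arctan v0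
      simp only [hθ]; linarith
    · exact hlt
  have hcos : 0 < Real.cos (θ t) := Real.cos_pos_of_mem_Ioo hθmem
  have hθd : HasDerivAt θ (s/4) t := by
    have : HasDerivAt (fun u => s/4*(u-t0)) (s/4 * 1) t :=
      ((hasDerivAt_id t).sub_const t0).const_mul (s/4)
    simpa [hθ] using this.add_const (Real.arctan v0)
  have htand : HasDerivAt (fun u => Real.tan (θ u)) (1 / Real.cos (θ t)^2 * (s/4)) t :=
    (Real.hasDerivAt_tan hcos.ne').comp t hθd
  have h2A : (0:ℝ) < 2*A := by linarith
  have hgd : HasDerivAt g (s * (1 / Real.cos (θ t)^2 * (s/4))/(2*A)) t := by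
    have h1 : HasDerivAt (fun u => s * Real.tan (θ u) - A2)
        (s * (1 / Real.cos (θ t)^2 * (s/4))) t :=
      (htand.const_mul s).sub_const A2
    have h2 := h1.div_const (2*A)
    have : g = fun u => (s * Real.tan (θ u) - A2)/(2*A) := funext hg
    rw [this]
    exact h2
  have htan : s * Real.tan (θ t) = 2*A*(g t) + A2 := by
    have h := hg t
    rw [eq_div_iff h2A.ne'] at h
    linarith [h]
  constructor
  · convert hgd using 1
    have hsec : (1 : ℝ) / Real.cos (θ t)^2 = 1 + Real.tan (θ t)^2 := by
      rw [one_div, ← Real.inv_one_add_tan_sq hcos.ne', inv_inv]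
    rw [hsec]
    field_simp
    linear_combination (-1)*(s*Real.tan (θ t) + 2*A*(g t) + A2)*htan + (-1)*hs2
  · have hv0mem : Real.arctan v0 ∈ Ioo (-(Real.pi/2)) (Real.pi/2) := Real.arctan_mem_Ioo v0
    have hle : Real.arctan v0 ≤ θ t := by simp only [hθ]; linarith
    have htanle : v0 ≤ Real.tan (θ t) := by
      have := Real.strictMonoOn_tan.monotoneOn hv0mem hθmem hle
      rwa [Real.tan_arctan] at this
    rw [hg t]
    gcongr


lemma perEps (lam1 b bB A A2 t0 t1 w0 s v0 : ℝ)
    (hA : 0 < A) (hbb : b < bB) (hw0 : 0 < w0)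
    (hs2 : s^2 = 4*A*bB - A2^2) (hspos : 0 < s)
    (hv : v0 = (2*A*w0 + A2)/s)
    (ht : t0 ≤ t1) (hl1 : 0 ≤ lam1)
    (W r D : ℝ → ℝ)
    (hrnn : ∀ t, 0 ≤ r t)
    (hWr : ∀ t ∈ Set.Icc t0 t1, lam1 * r t^2 ≤ W t)
    (hWd : ∀ t ∈ Set.Icc t0 t1, HasDerivAt W (D t) t)
    (hD : ∀ t ∈ Set.Icc t0 t1, ∀ x, Real.sqrt lam1 * r t ≤ x → D t ≤ b*x + A2*x^2 + A*x^3)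
    (hW0 : W t0 ≤ w0^2)
    (hRDT : s/4*(t1-t0) + Real.arctan v0 < Real.pi/2) :
    ∀ t ∈ Set.Icc t0 t1, Real.sqrt lam1 * r t
      ≤ (s * Real.tan (s/4*(t-t0) + Real.arctan v0) - A2)/(2*A) := by
  set g : ℝ → ℝ := fun u => (s * Real.tan (s/4*(u-t0) + Real.arctan v0) - A2)/(2*A) with hgdef
  have hg : ∀ u, g u = (s * Real.tan (s/4*(u-t0) + Real.arctan v0) - A2)/(2*A) := fun u => rfl
  have hric : ∀ t ∈ Set.Icc t0 t1,
      HasDerivAt g ((A * g t^2 + A2 * g t + bB)/2) t ∧ (s * v0 - A2)/(2*A) ≤ g t := by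
    intro t htm
    refine riccati_step A A2 bB t0 s v0 hA hs2 hspos g hg htm.1 ?_
    have : s/4*(t-t0) ≤ s/4*(t1-t0) :=
      mul_le_mul_of_nonneg_left (sub_le_sub_right htm.2 t0) (by linarith : (0:ℝ) ≤ s/4)
    linarith
  have hg0 : (s * v0 - A2)/(2*A) = w0 := by
    rw [hv]
    field_simp
    ring
  have hgpos : ∀ t ∈ Set.Icc t0 t1, w0 ≤ g t := by
    intro t htm
    have := (hric t htm).2
    rwa [hg0] at this
  -- key: √lam1 * r t ≤ x whenever lam1 * r t ^2 ≤ x^2 and 0 < x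
  have hsq : ∀ t, ∀ x : ℝ, 0 ≤ x → lam1 * r t^2 ≤ x^2 → Real.sqrt lam1 * r t ≤ x := by
    intro t x hx h
    have h1 : Real.sqrt (lam1 * r t^2) ≤ Real.sqrt (x^2) := Real.sqrt_le_sqrt h
    rwa [Real.sqrt_mul hl1, Real.sqrt_sq (hrnn t), Real.sqrt_sq hx] at h1
  have hcomp : ∀ t ∈ Set.Icc t0 t1, W t ≤ (g t)^2 := by
    have := image_le_of_deriv_right_lt_deriv_boundary'
      (f := W) (f' := D) (a := t0) (b := t1)
      (B := fun u => (g u)^2) (B' := fun u => g u * (A * (g u)^2 + A2 * g u + bB))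
      (fun x hx => (hWd x hx).continuousAt.continuousWithinAt)
      (fun x hx => ((hWd x (Set.Ico_subset_Icc_self hx))).hasDerivWithinAt)
      (by
        have : g t0 = w0 := by
          rw [hg t0]
          rw [← hg0]
          congr 1
          rw [sub_self, mul_zero, zero_add, Real.tan_arctan]
        show W t0 ≤ (g t0)^2
        rw [this]; exact hW0)
      (fun x hx => by
        exact (((hric x hx).1).pow 2).continuousAt.continuousWithinAt)
      (fun x hx => by
        have h := ((hric x (Set.Ico_subset_Icc_self hx)).1).fun_pow 2
        have : (2:ℕ) • ((A * g x^2 + A2 * g x + bB)/2) * g x ^ (2-1)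
            = g x * (A * (g x)^2 + A2 * g x + bB) := by ring
        refine h.hasDerivWithinAt.congr_deriv ?_
        push_cast
        ring)
      (fun x hx hWx => by
        have hxm := Set.Ico_subset_Icc_self hx
        have hgx : 0 < g x := lt_of_lt_of_le hw0 (hgpos x hxm)
        have hle : Real.sqrt lam1 * r x ≤ g x := by
          apply hsq x (g x) hgx.le
          rw [← hWx]; exact hWr x hxm
        have hDle := hD x hxm (g x) hle
        have : b * g x + A2 * (g x)^2 + A * (g x)^3
            < g x * (A * (g x)^2 + A2 * g x + bB) := by nlinarith
        show D x < g x * (A * (g x)^2 + A2 * g x + bB)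
        linarith)
    intro t htm
    exact this htm
  intro t htm
  have hgt : 0 < g t := lt_of_lt_of_le hw0 (hgpos t htm)
  exact (hsq t (g t) hgt.le (le_trans (hWr t htm) (hcomp t htm))).trans_eq rfl


/-- Theorem 2 of the paper: growth bound (22) on the tracking error in the
uncontrolled region under the reverse dwell-time condition (26), stated for
classical solutions of the uncontrolled error dynamics. -/
theorem uncontrolled_region_growth_bound
    (cm cM c1 c2 c3 α t0 t1 lam1 lam2 a1 a2 a3 : ℝ)
    (hcm : 0 < cm) (hcmM : cm ≤ cM)
    (hc1 : 0 < c1) (hc2 : 0 < c2) (hc3 : 0 < c3)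
    (hα : 0 < α) (ht : t0 ≤ t1)
    (hlam1 : lam1 = min (1/2) (cm/2)) (hlam2 : lam2 = max (1/2) (cM/2))
    (ha1 : a1 = c3 / lam1 ^ ((3 : ℝ)/2)) (ha2 : a2 = (c2 + 1/2) / lam1)
    (hdisc : a2 ^ 2 < 4 * a1 * c1 / Real.sqrt lam1)
    (ha3 : a3 = Real.sqrt (4 * a1 * c1 / Real.sqrt lam1 - a2 ^ 2))
    (e1 e2 M χ V : ℝ → ℝ)
    (hMb : ∀ t ∈ Set.Icc t0 t1, cm ≤ M t ∧ M t ≤ cM)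
    (hMdiff : ∀ t ∈ Set.Icc t0 t1, DifferentiableAt ℝ M t)
    (hV : ∀ t ∈ Set.Icc t0 t1, V t = deriv M t / 2)
    (hχ : ∀ t ∈ Set.Icc t0 t1,
      |χ t| ≤ c1 + c2 * zNorm e1 e2 t + c3 * (zNorm e1 e2 t) ^ 2)
    (he1 : ∀ t ∈ Set.Icc t0 t1, HasDerivAt e1 (e2 t - α * e1 t) t)
    (he2diff : ∀ t ∈ Set.Icc t0 t1, DifferentiableAt ℝ e2 t)
    (he2 : ∀ t ∈ Set.Icc t0 t1, M t * deriv e2 t = χ t - V t * e2 t)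
    (hrdt : (a3/4) * (t1 - t0)
        + Real.arctan ((2 * a1/a3) * Real.sqrt lam2 * zNorm e1 e2 t0 + a2/a3)
        < Real.pi/2) :
    ∀ t ∈ Set.Icc t0 t1,
      zNorm e1 e2 t ≤ (1/(2 * a1 * Real.sqrt lam1)) *
        (a3 * Real.tan ((a3/4) * (t - t0)
            + Real.arctan ((2 * a1/a3) * Real.sqrt lam2 * zNorm e1 e2 t0 + a2/a3))
          - a2) := by
  -- constants
  have hl1 : 0 < lam1 := by rw [hlam1]; exact lt_min (by norm_num) (by linarith)
  have hl1h : lam1 ≤ 1/2 := hlam1 ▸ min_le_left _ _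
  have hl1cm : lam1 ≤ cm/2 := hlam1 ▸ min_le_right _ _
  have hl2h : 1/2 ≤ lam2 := hlam2 ▸ le_max_left _ _
  have hl2cM : cM/2 ≤ lam2 := hlam2 ▸ le_max_right _ _
  have hl2 : 0 < lam2 := by linarith
  have hs1 : 0 < Real.sqrt lam1 := Real.sqrt_pos.mpr hl1
  have hs1sq : Real.sqrt lam1 ^ 2 = lam1 := Real.sq_sqrt hl1.le
  have h32 : lam1 ^ ((3:ℝ)/2) = Real.sqrt lam1 ^ 3 := by
    rw [Real.sqrt_eq_rpow, ← Real.rpow_natCast (lam1 ^ ((1:ℝ)/2)) 3,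
      ← Real.rpow_mul hl1.le]
    norm_num
  have ha1' : a1 = c3 / Real.sqrt lam1 ^ 3 := by rw [ha1, h32]
  have hA : 0 < a1 := by rw [ha1']; positivity
  have hA2 : 0 < a2 := by rw [ha2]; positivity
  -- the norm function
  set r : ℝ → ℝ := zNorm e1 e2 with hrdef
  have hrnn : ∀ t, 0 ≤ r t := fun t => Real.sqrt_nonneg _
  have hrsq : ∀ t, r t ^ 2 = e1 t ^ 2 + e2 t ^ 2 := fun t =>
    Real.sq_sqrt (by positivity)
  have habs1 : ∀ t, |e1 t| ≤ r t := by
    intro t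
    rw [hrdef, zNorm, ← Real.sqrt_sq_eq_abs]
    exact Real.sqrt_le_sqrt (by linarith [sq_nonneg (e2 t)])
  have habs2 : ∀ t, |e2 t| ≤ r t := by
    intro t
    rw [hrdef, zNorm, ← Real.sqrt_sq_eq_abs]
    exact Real.sqrt_le_sqrt (by linarith [sq_nonneg (e1 t)])
  -- energy function
  set W : ℝ → ℝ := fun u => (e1 u ^ 2 + M u * e2 u ^ 2) / 2 with hWdef
  have hsand : ∀ t ∈ Set.Icc t0 t1, lam1 * r t ^ 2 ≤ W t ∧ W t ≤ lam2 * r t ^ 2 := by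
    intro t htm
    obtain ⟨hm1, hm2⟩ := hMb t htm
    have h1 := hrsq t
    constructor
    · show lam1 * r t ^2 ≤ (e1 t ^ 2 + M t * e2 t ^2)/2
      have hM1 : 2*lam1*e2 t^2 ≤ M t * e2 t^2 :=
        mul_le_mul_of_nonneg_right (by linarith) (sq_nonneg _)
      have h1' : lam1 * r t^2 = lam1 * e1 t^2 + lam1 * e2 t^2 := by rw [h1]; ring
      have hM0 : lam1 * e1 t^2 ≤ 1/2 * e1 t^2 :=
        mul_le_mul_of_nonneg_right hl1h (sq_nonneg _)
      linarith
    · show (e1 t ^ 2 + M t * e2 t ^2)/2 ≤ lam2 * r t ^2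
      have hM2 : M t * e2 t^2 ≤ 2*lam2*e2 t^2 :=
        mul_le_mul_of_nonneg_right (by linarith) (sq_nonneg _)
      have hE1 : e1 t^2 ≤ 2*lam2*e1 t^2 := by
        have := mul_nonneg (by linarith : (0:ℝ) ≤ 2*lam2 - 1) (sq_nonneg (e1 t))
        linarith
      have h2' : lam2 * r t^2 = lam2 * e1 t^2 + lam2 * e2 t^2 := by rw [h1]; ring
      linarith
  set D : ℝ → ℝ := fun u => e1 u * e2 u - α * e1 u ^ 2 + χ u * e2 u with hDdef
  have hWd : ∀ t ∈ Set.Icc t0 t1, HasDerivAt W (D t) t := by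
    intro t htm
    have hM' : HasDerivAt M (deriv M t) t := (hMdiff t htm).hasDerivAt
    have hE2 : HasDerivAt e2 (deriv e2 t) t := (he2diff t htm).hasDerivAt
    have h1 : HasDerivAt (fun u => e1 u ^ 2)
        ((2:ℕ) * e1 t ^ 1 * (e2 t - α * e1 t)) t := (he1 t htm).pow 2
    have h2 : HasDerivAt (fun u => M u * e2 u ^ 2)
        (deriv M t * e2 t ^ 2 + M t * ((2:ℕ) * e2 t ^ 1 * deriv e2 t)) t :=
      hM'.mul (hE2.pow 2)
    have h3 := (h1.fun_add h2).div_const 2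
    refine h3.congr_deriv (Eq.symm ?_)
    have hMe2 := he2 t htm
    have hVt := hV t htm
    have hMV : deriv M t = 2 * V t := by rw [hVt]; ring
    show e1 t * e2 t - α * e1 t ^2 + χ t * e2 t = _
    rw [hMV]
    push_cast
    have : M t * (2 * e2 t ^ 1 * deriv e2 t) = 2 * e2 t * (χ t - V t * e2 t) := by
      rw [← hMe2]; ring
    rw [this]
    ring
  have hD : ∀ t ∈ Set.Icc t0 t1, ∀ x, Real.sqrt lam1 * r t ≤ x →
      D t ≤ (c1/Real.sqrt lam1)*x + a2*x^2 + a1*x^3 := by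
    intro t htm x hx
    have hrx := hrsq t
    have hb1 : e1 t * e2 t ≤ r t ^2 / 2 := by linarith [sq_nonneg (e1 t - e2 t)]
    have hb2 : χ t * e2 t ≤ (c1 + c2 * r t + c3 * r t ^2) * r t := by
      calc χ t * e2 t ≤ |χ t * e2 t| := le_abs_self _
        _ = |χ t| * |e2 t| := abs_mul _ _
        _ ≤ (c1 + c2 * r t + c3 * r t ^2) * r t := by
            apply mul_le_mul (hχ t htm) (habs2 t) (abs_nonneg _)
            have := hrnn t; positivity
    have hb3 : 0 ≤ α * e1 t ^2 := by positivity
    have hstep1 : D t ≤ c1 * r t + (c2 + 1/2) * r t^2 + c3 * r t^3 := by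
      show e1 t * e2 t - α * e1 t ^ 2 + χ t * e2 t ≤ _
      linarith [hb1, hb2, hb3]
    have hx0 : 0 ≤ x := le_trans (mul_nonneg hs1.le (hrnn t)) hx
    have hxr : Real.sqrt lam1 * r t ≤ x := hx
    have hc1b : c1 * r t ≤ (c1/Real.sqrt lam1) * x := by
      rw [div_mul_eq_mul_div, le_div_iff₀ hs1]
      linarith [mul_le_mul_of_nonneg_left hxr hc1.le]
    have hsq2 : lam1 * r t^2 ≤ x^2 := by
      have h := pow_le_pow_left₀ (mul_nonneg hs1.le (hrnn t)) hxr 2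
      rwa [mul_pow, hs1sq] at h
    have hc2b : (c2 + 1/2) * r t^2 ≤ a2 * x^2 := by
      rw [ha2, div_mul_eq_mul_div, le_div_iff₀ hl1]
      linarith [mul_le_mul_of_nonneg_left hsq2 (by linarith : (0:ℝ) ≤ c2 + 1/2)]
    have hc3b : c3 * r t^3 ≤ a1 * x^3 := by
      rw [ha1', div_mul_eq_mul_div, le_div_iff₀ (pow_pos hs1 3)]
      have hcube : (Real.sqrt lam1 * r t)^3 ≤ x^3 := by
        apply pow_le_pow_left₀ (mul_nonneg hs1.le (hrnn t)) hxr
      rw [mul_pow] at hcube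
      linarith [mul_le_mul_of_nonneg_left hcube hc3.le]
    linarith
  -- a3 facts
  have hargpos : 0 < 4 * a1 * c1 / Real.sqrt lam1 - a2 ^ 2 := by linarith [hdisc]
  have ha3pos : 0 < a3 := ha3 ▸ Real.sqrt_pos.mpr hargpos
  have ha3sq : a3 ^ 2 = 4 * a1 * (c1 / Real.sqrt lam1) - a2 ^ 2 := by
    rw [ha3, Real.sq_sqrt hargpos.le]; ring
  -- now the limit argument
  intro t htm
  obtain ⟨ht0, ht1⟩ := htm
  set S : ℝ → ℝ := fun ε => Real.sqrt (a3 ^ 2 + 4 * a1 * ε) with hS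
  set Vf : ℝ → ℝ := fun ε => (2 * a1 * (Real.sqrt lam2 * r t0 + ε) + a2) / S ε with hVf
  set Θ : ℝ → ℝ → ℝ := fun τ ε => S ε / 4 * (τ - t0) + Real.arctan (Vf ε) with hΘ
  set F : ℝ → ℝ := fun ε => (S ε * Real.tan (Θ t ε) - a2) / (2 * a1 * Real.sqrt lam1)
    with hF
  have hS0 : S 0 = a3 := by
    show Real.sqrt (a3 ^ 2 + 4 * a1 * 0) = a3
    rw [mul_zero, add_zero, Real.sqrt_sq ha3pos.le]
  have hv00 : Vf 0 = (2 * a1 / a3) * Real.sqrt lam2 * r t0 + a2 / a3 := by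
    show (2 * a1 * (Real.sqrt lam2 * r t0 + 0) + a2) / S 0 = _
    rw [hS0]
    field_simp
    ring
  have hΘ0 : ∀ τ, Θ τ 0 = (a3/4) * (τ - t0)
      + Real.arctan ((2 * a1 / a3) * Real.sqrt lam2 * r t0 + a2 / a3) := by
    intro τ
    show S 0 / 4 * (τ - t0) + Real.arctan (Vf 0) = _
    rw [hS0, hv00]
  have hrdt1 : Θ t1 0 < Real.pi / 2 := by rw [hΘ0]; exact hrdt
  have hΘt0lt : Θ t 0 < Real.pi / 2 := by
    have h1 := hΘ0 t
    have h2 := hΘ0 t1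
    have : (a3/4) * (t - t0) ≤ (a3/4) * (t1 - t0) :=
      mul_le_mul_of_nonneg_left (sub_le_sub_right ht1 t0) (by linarith : (0:ℝ) ≤ a3/4)
    rw [hΘ0]
    rw [hΘ0 t1] at hrdt1
    linarith
  have hcos0 : 0 < Real.cos (Θ t 0) := by
    apply Real.cos_pos_of_mem_Ioo
    constructor
    · rw [hΘ0]
      have h1 := Real.neg_pi_div_two_lt_arctan ((2 * a1 / a3) * Real.sqrt lam2 * r t0 + a2 / a3)
      have h2 : 0 ≤ (a3/4) * (t - t0) :=
        mul_le_mul_of_nonneg_left (by linarith : (0:ℝ) ≤ t - t0) (by linarith : (0:ℝ) ≤ a3/4)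
        |>.trans_eq (by ring) |>.trans_eq' (by ring)
      linarith
    · exact hΘt0lt
  -- continuity
  have hScont : Continuous S := by
    apply Real.continuous_sqrt.comp
    continuity
  have hVcont : ContinuousAt Vf 0 := by
    apply ContinuousAt.div
    · fun_prop
    · exact hScont.continuousAt
    · rw [hS0]; exact ha3pos.ne'
  have hΘcont : ∀ τ, ContinuousAt (Θ τ) 0 := by
    intro τ
    apply ContinuousAt.add
    · exact ((hScont.continuousAt.div_const 4).mul continuousAt_const)
    · exact Real.continuous_arctan.continuousAt.comp hVcont
  have hFcont : ContinuousAt F 0 := by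
    apply ContinuousAt.div_const
    apply ContinuousAt.sub ?_ continuousAt_const
    apply ContinuousAt.mul hScont.continuousAt
    exact (Real.continuousAt_tan.mpr hcos0.ne').comp (hΘcont t)
  have hTend : Filter.Tendsto F (nhdsWithin 0 (Set.Ioi 0)) (nhds (F 0)) :=
    hFcont.continuousWithinAt
  have hev : ∀ᶠ ε in nhdsWithin (0:ℝ) (Set.Ioi 0), r t ≤ F ε := by
    have h1 : ∀ᶠ ε in nhds (0:ℝ), Θ t1 ε < Real.pi / 2 :=
      (hΘcont t1).tendsto.eventually_lt_const hrdt1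
    filter_upwards [eventually_nhdsWithin_of_eventually_nhds h1, self_mem_nhdsWithin]
      with ε hε1 hε2
    have hεpos : (0:ℝ) < ε := hε2
    have hsargpos : 0 < a3 ^ 2 + 4 * a1 * ε :=
      add_pos (pow_pos ha3pos 2) (mul_pos (by linarith : (0:ℝ) < 4 * a1) hεpos)
    have hSpos : 0 < S ε := Real.sqrt_pos.mpr hsargpos
    have hSsq : (S ε) ^ 2 = 4 * a1 * (c1 / Real.sqrt lam1 + ε) - a2 ^ 2 := by
      show Real.sqrt (a3 ^ 2 + 4 * a1 * ε) ^ 2 = _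
      rw [Real.sq_sqrt hsargpos.le]
      linear_combination ha3sq
    have hw0pos : 0 < Real.sqrt lam2 * r t0 + ε :=
      add_pos_of_nonneg_of_pos (mul_nonneg (Real.sqrt_nonneg _) (hrnn t0)) hεpos
    have hW0 : W t0 ≤ (Real.sqrt lam2 * r t0 + ε) ^ 2 := by
      have h2 := (hsand t0 ⟨le_refl t0, ht⟩).2
      have h3 : lam2 * r t0 ^ 2 = (Real.sqrt lam2 * r t0) ^ 2 := by
        rw [mul_pow, Real.sq_sqrt hl2.le]
      refine (h2.trans_eq h3).trans
        (sq_le_sq_add _ _ (mul_nonneg (Real.sqrt_nonneg lam2) (hrnn t0)) hεpos.le)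
    have hkey := perEps lam1 (c1 / Real.sqrt lam1) (c1 / Real.sqrt lam1 + ε) a1 a2 t0 t1
      (Real.sqrt lam2 * r t0 + ε) (S ε) (Vf ε) hA (lt_add_of_pos_right _ hεpos) hw0pos
      hSsq hSpos rfl ht hl1.le W r D hrnn (fun u hu => (hsand u hu).1) hWd hD hW0 hε1
      t ⟨ht0, ht1⟩
    show r t ≤ (S ε * Real.tan (Θ t ε) - a2) / (2 * a1 * Real.sqrt lam1)
    rw [show (2 * a1 * Real.sqrt lam1) = (2 * a1) * Real.sqrt lam1 by ring, ← div_div,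
      le_div_iff₀ hs1]
    calc r t * Real.sqrt lam1 = Real.sqrt lam1 * r t := by ring
      _ ≤ _ := hkey
  have hfin : r t ≤ F 0 := ge_of_tendsto hTend hev
  have hF0 : F 0 = (1/(2 * a1 * Real.sqrt lam1)) *
      (a3 * Real.tan ((a3/4) * (t - t0)
          + Real.arctan ((2 * a1/a3) * Real.sqrt lam2 * r t0 + a2/a3)) - a2) := by
    show (S 0 * Real.tan (Θ t 0) - a2) / (2 * a1 * Real.sqrt lam1) = _
    rw [hS0, hΘ0]
    ring
  rwa [hF0] at hfin
end

section
/- Let α > 0, λ2 ≥ λ1 > 0, and let q, q_d : [a, b] → ℝ be differentiable with e1 ≜ q_d − q and e2 ≜ e1′ + α e1. Suppose q_d′(t) ≤ Q for all t ∈ [a, b], ‖z(t)‖ ≤ √(λ2/λ1)·‖z(a)‖ for all t ∈ [a, b], q(b) − q(a) = Δq > 0, and Q + (1 + α)√(λ2/λ1)·‖z(a)‖ > 0. Then the traversal time satisfies b − a ≥ Δq / (Q + (1 + α)√(λ2/λ1)·‖z(a)‖). -/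
/-- Proposition 1 of the paper, bound (33): the time spent traversing a
controlled region of angular length `Δq` admits a positive lower bound. -/
theorem controlled_region_dwell_time_lower_bound
    (α lam1 lam2 Q Δq a b : ℝ)
    (hα : 0 < α) (hlam1 : 0 < lam1) (hlam : lam1 ≤ lam2) (hab : a ≤ b)
    (q qd e1 e2 : ℝ → ℝ)
    (hq : ∀ t ∈ Set.Icc a b, DifferentiableAt ℝ q t)
    (hqd : ∀ t ∈ Set.Icc a b, DifferentiableAt ℝ qd t)
    (he1 : ∀ t, e1 t = qd t - q t)
    (he2 : ∀ t, e2 t = deriv e1 t + α * e1 t)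
    (hQ : ∀ t ∈ Set.Icc a b, deriv qd t ≤ Q)
    (hz : ∀ t ∈ Set.Icc a b,
      Real.sqrt ((e1 t) ^ 2 + (e2 t) ^ 2)
        ≤ Real.sqrt (lam2/lam1) * Real.sqrt ((e1 a) ^ 2 + (e2 a) ^ 2))
    (hΔq : q b - q a = Δq) (hΔqpos : 0 < Δq)
    (hden : 0 < Q + (1 + α) * Real.sqrt (lam2/lam1)
        * Real.sqrt ((e1 a) ^ 2 + (e2 a) ^ 2)) :
    Δq / (Q + (1 + α) * Real.sqrt (lam2/lam1)
        * Real.sqrt ((e1 a) ^ 2 + (e2 a) ^ 2)) ≤ b - a := by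
  set M := Real.sqrt (lam2/lam1) * Real.sqrt ((e1 a) ^ 2 + (e2 a) ^ 2) with hM
  rcases eq_or_lt_of_le hab with rfl | hab'
  · simp at hΔq; linarith
  -- MVT
  obtain ⟨c, hc, hderiv⟩ := exists_deriv_eq_slope q hab'
    (fun t ht => (hq t ht).continuousAt.continuousWithinAt)
    (fun t ht => (hq t (Set.mem_Icc_of_Ioo ht)).differentiableWithinAt)
  have hcIcc : c ∈ Set.Icc a b := Set.mem_Icc_of_Ioo hc
  have hqdc := hqd c hcIcc
  have hqc := hq c hcIcc
  have he1d : deriv e1 c = deriv qd c - deriv q c := by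
    have : e1 = fun t => qd t - q t := funext he1
    rw [this, deriv_fun_sub hqdc hqc]
  have hqderiv : deriv q c = deriv qd c - e2 c + α * e1 c := by
    rw [he2 c, he1d]; ring
  have hN : Real.sqrt ((e1 c) ^ 2 + (e2 c) ^ 2) ≤ M := hz c hcIcc
  have habs1 : |e1 c| ≤ Real.sqrt ((e1 c) ^ 2 + (e2 c) ^ 2) := by
    rw [← Real.sqrt_sq_eq_abs]
    exact Real.sqrt_le_sqrt (by nlinarith [sq_nonneg (e2 c)])
  have habs2 : |e2 c| ≤ Real.sqrt ((e1 c) ^ 2 + (e2 c) ^ 2) := by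
    rw [← Real.sqrt_sq_eq_abs]
    exact Real.sqrt_le_sqrt (by nlinarith [sq_nonneg (e1 c)])
  have h1 : e1 c ≤ M := le_trans (le_trans (le_abs_self _) habs1) hN
  have h2 : -(e2 c) ≤ M := le_trans (le_trans (neg_le_abs _) habs2) hN
  have hslope : deriv q c ≤ Q + (1 + α) * M := by
    rw [hqderiv]
    have := hQ c hcIcc
    nlinarith
  rw [hderiv, hΔq] at hslope
  rw [div_le_iff₀ hden]
  rw [div_le_iff₀ (by linarith : (0:ℝ) < b - a)] at hslope
  have heq : Q + (1 + α) * Real.sqrt (lam2/lam1) * Real.sqrt ((e1 a) ^ 2 + (e2 a) ^ 2)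
      = Q + (1 + α) * M := by rw [hM]; ring
  rw [heq]
  nlinarith
end

section
/- Let α > 0, λ2 ≥ λ1 > 0, Δt_min > 0, and let q, q_d : [a, b] → ℝ be differentiable with e1 ≜ q_d − q and e2 ≜ e1′ + α e1. Suppose ‖z(t)‖ ≤ √(λ2/λ1)·‖z(a)‖ for all t ∈ [a, b], q(b) − q(a) = Δq > 0, and the desired cadence satisfies, for all t ∈ [a, b], q_d′(t) ≤ Δq/Δt_min − (1 + α)√(λ2/λ1)·‖z(a)‖, with this upper bound positive. Then b − a ≥ Δt_min. -/
/-- Sufficient condition (34): if the maximum desired cadence is small enough,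
then the time spent in the controlled region exceeds a prescribed minimum
dwell time `Δt_min`. -/
theorem desired_cadence_guarantees_min_dwell_time
    (α lam1 lam2 Δtmin Δq a b : ℝ)
    (hα : 0 < α) (hlam1 : 0 < lam1) (hlam : lam1 ≤ lam2) (hΔtmin : 0 < Δtmin)
    (hab : a ≤ b)
    (q qd e1 e2 : ℝ → ℝ)
    (hq : ∀ t ∈ Set.Icc a b, DifferentiableAt ℝ q t)
    (hqd : ∀ t ∈ Set.Icc a b, DifferentiableAt ℝ qd t)
    (he1 : ∀ t, e1 t = qd t - q t)
    (he2 : ∀ t, e2 t = deriv e1 t + α * e1 t)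
    (hz : ∀ t ∈ Set.Icc a b,
      Real.sqrt ((e1 t) ^ 2 + (e2 t) ^ 2)
        ≤ Real.sqrt (lam2/lam1) * Real.sqrt ((e1 a) ^ 2 + (e2 a) ^ 2))
    (hΔq : q b - q a = Δq) (hΔqpos : 0 < Δq)
    (hQ : ∀ t ∈ Set.Icc a b,
      deriv qd t ≤ Δq/Δtmin - (1 + α) * Real.sqrt (lam2/lam1)
          * Real.sqrt ((e1 a) ^ 2 + (e2 a) ^ 2))
    (hpos : 0 < Δq/Δtmin - (1 + α) * Real.sqrt (lam2/lam1)
        * Real.sqrt ((e1 a) ^ 2 + (e2 a) ^ 2)) :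
    Δtmin ≤ b - a := by
  set M : ℝ := Real.sqrt (lam2/lam1) * Real.sqrt ((e1 a) ^ 2 + (e2 a) ^ 2) with hM
  have he1f : e1 = fun t => qd t - q t := funext he1
  -- bounds on |e1 t| and |e2 t|
  have habs : ∀ t ∈ Set.Icc a b, |e1 t| ≤ M ∧ |e2 t| ≤ M := by
    intro t ht
    have hs := hz t ht
    constructor
    · have h1 : |e1 t| ≤ Real.sqrt ((e1 t) ^ 2 + (e2 t) ^ 2) := by
        rw [← Real.sqrt_sq_eq_abs]
        exact Real.sqrt_le_sqrt (by nlinarith [sq_nonneg (e2 t)])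
      linarith
    · have h1 : |e2 t| ≤ Real.sqrt ((e1 t) ^ 2 + (e2 t) ^ 2) := by
        rw [← Real.sqrt_sq_eq_abs]
        exact Real.sqrt_le_sqrt (by nlinarith [sq_nonneg (e1 t)])
      linarith
  -- deriv q bound on Icc
  have hderivq : ∀ t ∈ Set.Icc a b, deriv q t ≤ Δq / Δtmin := by
    intro t ht
    have hqt := hq t ht
    have hqdt := hqd t ht
    have hde1 : deriv e1 t = deriv qd t - deriv q t := by
      rw [he1f, deriv_fun_sub hqdt hqt]
    have hderq : deriv q t = deriv qd t - (e2 t - α * e1 t) := by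
      have := he2 t
      rw [hde1] at this
      linarith
    have hb := habs t ht
    have h1 : -M ≤ e2 t := (abs_le.mp hb.2).1
    have h2 : e1 t ≤ M := (abs_le.mp hb.1).2
    have h3 : deriv qd t ≤ Δq / Δtmin - (1 + α) * M := by
      have := hQ t ht
      rw [hM, ← mul_assoc]
      exact this
    rw [hderq]
    have h4 : -(e2 t - α * e1 t) ≤ M + α * M := by nlinarith
    calc deriv qd t - (e2 t - α * e1 t)
        ≤ (Δq/Δtmin - (1 + α) * M) + (M + α * M) := by linarith
      _ = Δq / Δtmin := by ring
  -- monotonicity argument: g t = (Δq/Δtmin) * t - q t is monotone on Icc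
  set C : ℝ := Δq / Δtmin with hC
  have hcont : ContinuousOn (fun t => C * t - q t) (Set.Icc a b) := by
    apply ContinuousOn.sub
    · exact (continuous_const.mul continuous_id).continuousOn
    · exact fun t ht => (hq t ht).continuousAt.continuousWithinAt
  have hdiff : DifferentiableOn ℝ (fun t => C * t - q t) (interior (Set.Icc a b)) := by
    intro t ht
    have ht' : t ∈ Set.Icc a b := interior_subset ht
    exact ((differentiableAt_id.const_mul C).sub (hq t ht')).differentiableWithinAt
  have hmono : MonotoneOn (fun t => C * t - q t) (Set.Icc a b) := by
    apply monotoneOn_of_deriv_nonneg (convex_Icc a b) hcont hdiff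
    intro t ht
    have ht' : t ∈ Set.Icc a b := interior_subset ht
    have : deriv (fun t => C * t - q t) t = C - deriv q t := by
      have hd : HasDerivAt (fun t => C * t - q t) (C - deriv q t) t := by
        simpa using ((hasDerivAt_id t).const_mul C).fun_sub ((hq t ht').hasDerivAt)
      exact hd.deriv
    rw [this]
    have := hderivq t ht'
    linarith
  have hga : C * a - q a ≤ C * b - q b :=
    hmono (Set.left_mem_Icc.mpr hab) (Set.right_mem_Icc.mpr hab) hab
  have key : Δq ≤ C * (b - a) := by
    have : q b - q a ≤ C * (b - a) := by linarith [hga]; 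
    linarith [hΔq ▸ this]
  have hCpos : 0 < C := div_pos hΔqpos hΔtmin
  -- Δq ≤ (Δq/Δtmin)*(b-a)  ⇒  Δtmin ≤ b-a
  rw [hC, div_mul_eq_mul_div, le_div_iff₀ hΔtmin] at key
  nlinarith
end

section
/- Let α > 0, λ2 ≥ λ1 > 0, γ1 > 0, Δt_min > 0, q̇crit > 0. Let q, q_d be differentiable at time t_off, with e1 ≜ q_d − q and e2 ≜ e1′ + α e1, and suppose the error at t_off satisfies the exponential decay estimate ‖z(t_off)‖ ≤ √(λ2/λ1)·‖z(t_on)‖·e^{−γ1 Δt_min/(2 λ2)} for some earlier on-time t_on. If the desired cadence satisfies q_d′(t_off) ≥ q̇crit + (1 + α)√(λ2/λ1)·‖z(t_on)‖·e^{−γ1 Δt_min/(2 λ2)}, then q′(t_off) ≥ q̇crit. -/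
/-- Conditions (36)–(39): if the desired cadence at an off-time exceeds the
critical velocity by a margin proportional to the exponentially decayed
initial error, then the actual crank velocity entering the uncontrolled
region exceeds the critical velocity. -/
theorem off_time_velocity_exceeds_critical
    (α lam1 lam2 γ1 Δtmin qcrit toff Zon : ℝ)
    (hα : 0 < α) (hlam1 : 0 < lam1) (hlam : lam1 ≤ lam2)
    (hγ1 : 0 < γ1) (hΔtmin : 0 < Δtmin) (hqcrit : 0 < qcrit) (hZon : 0 ≤ Zon)
    (q qd e1 e2 : ℝ → ℝ)
    (hq : DifferentiableAt ℝ q toff) (hqd : DifferentiableAt ℝ qd toff)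
    (he1 : ∀ t, e1 t = qd t - q t)
    (he2 : ∀ t, e2 t = deriv e1 t + α * e1 t)
    (hz : Real.sqrt ((e1 toff) ^ 2 + (e2 toff) ^ 2)
      ≤ Real.sqrt (lam2/lam1) * Zon * Real.exp (-γ1 * Δtmin / (2 * lam2)))
    (hqd' : deriv qd toff
      ≥ qcrit + (1 + α) * Real.sqrt (lam2/lam1) * Zon
          * Real.exp (-γ1 * Δtmin / (2 * lam2))) :
    deriv q toff ≥ qcrit := by
  set M := Real.sqrt (lam2/lam1) * Zon * Real.exp (-γ1 * Δtmin / (2 * lam2)) with hM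
  have he1f : e1 = fun t => qd t - q t := funext he1
  have hde1 : deriv e1 toff = deriv qd toff - deriv q toff := by
    rw [he1f, deriv_fun_sub hqd hq]
  have h1 : |e1 toff| ≤ M := by
    refine le_trans ?_ hz
    rw [← Real.sqrt_sq_eq_abs]
    exact Real.sqrt_le_sqrt (by nlinarith [sq_nonneg (e2 toff)])
  have h2 : |e2 toff| ≤ M := by
    refine le_trans ?_ hz
    rw [← Real.sqrt_sq_eq_abs]
    exact Real.sqrt_le_sqrt (by nlinarith [sq_nonneg (e1 toff)])
  have hde1' : deriv e1 toff = e2 toff - α * e1 toff := by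
    have := he2 toff; linarith
  have habs1 := abs_le.mp h1
  have habs2 := abs_le.mp h2
  nlinarith [habs1.1, habs1.2, habs2.1, habs2.2]
end
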